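/- There exists a constant C > 0 such that for all continuous functions f, g : ℝ² → ℝ and every continuously differentiable function h : ℝ² → ℝ, each 1-periodic in both variables, one has ∫_{[0,1]²} |f g h| dx dz ≤ C ‖f‖_{L²} · ( sup_{z ∈ [0,1]} (∫₀¹ |g(x,z)|² dx)^{1/2} ) · ‖h‖_{L²}^{1/2} (‖h‖_{L²}^{1/2} + ‖∂_x h‖_{L²}^{1/2}). -/

import Mathlib

open MeasureTheory

noncomputable section

/-- `f : ℝ² → ℝ` is 1-periodic in each of its two variables. -/
def Per (f : ℝ × ℝ → ℝ) : Prop :=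
  (∀ x z, f (x + 1, z) = f (x, z)) ∧ (∀ x z, f (x, z + 1) = f (x, z))

/-- Partial derivative in the first variable. -/
def pdx (f : ℝ × ℝ → ℝ) : ℝ × ℝ → ℝ := fun p => deriv (fun x => f (x, p.2)) p.1

/-- The `L²` norm over the fundamental domain `[0,1]²`. -/
def l2 (f : ℝ × ℝ → ℝ) : ℝ :=
  Real.sqrt (∫ x in (0:ℝ)..1, ∫ z in (0:ℝ)..1, f (x, z) ^ 2)

namespace StmtAux

abbrev I01 : Set ℝ := Set.Ioc (0:ℝ) 1
abbrev Q2 : Set (ℝ × ℝ) := I01 ×ˢ I01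

lemma finQ : IsFiniteMeasure (volume.restrict Q2) := by
  constructor
  rw [Measure.restrict_apply_univ]
  exact lt_of_le_of_lt (measure_mono (Set.prod_mono Set.Ioc_subset_Icc_self Set.Ioc_subset_Icc_self))
    (IsCompact.measure_lt_top (isCompact_Icc.prod isCompact_Icc))

lemma memLpQ (p : ENNReal) {u : ℝ × ℝ → ℝ} (hu : Continuous u) :
    MemLp u p (volume.restrict Q2) := by
  have : IsFiniteMeasure (volume.restrict Q2) := finQ
  obtain ⟨C, hC⟩ := (isCompact_Icc.prod isCompact_Icc).exists_bound_of_continuousOn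
    (hu.continuousOn (s := Set.Icc (0:ℝ) 1 ×ˢ Set.Icc (0:ℝ) 1))
  refine MemLp.of_bound hu.aestronglyMeasurable.restrict C ?_
  refine (ae_restrict_iff' (measurableSet_Ioc.prod measurableSet_Ioc)).2 (ae_of_all _ ?_)
  intro x hx
  exact hC x (Set.prod_mono Set.Ioc_subset_Icc_self Set.Ioc_subset_Icc_self hx)

lemma cs_mem {α : Type*} [MeasurableSpace α] {μ : Measure α} {u v : α → ℝ}
    (hu : MemLp u 2 μ) (hv : MemLp v 2 μ) :
    ∫ a, |u a * v a| ∂μ ≤ Real.sqrt (∫ a, u a ^ 2 ∂μ) * Real.sqrt (∫ a, v a ^ 2 ∂μ) := by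
  have hpq : Real.HolderConjugate 2 2 := Real.HolderConjugate.two_two
  have h2 : ENNReal.ofReal (2:ℝ) = 2 := by rw [ENNReal.ofReal_ofNat]
  have H := integral_mul_norm_le_Lp_mul_Lq hpq (h2 ▸ hu) (h2 ▸ hv)
  have e1 : ∫ a, |u a * v a| ∂μ = ∫ a, ‖u a‖ * ‖v a‖ ∂μ := by
    congr 1; ext a; rw [abs_mul]; rfl
  have e2 : ∫ a, ‖u a‖ ^ (2:ℝ) ∂μ = ∫ a, u a ^ 2 ∂μ := by
    congr 1; ext a
    rw [show ‖u a‖ ^ (2:ℝ) = ‖u a‖ ^ (2:ℕ) by rw [← Real.rpow_natCast]; norm_num]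
    simp [sq_abs]
  have e3 : ∫ a, ‖v a‖ ^ (2:ℝ) ∂μ = ∫ a, v a ^ 2 ∂μ := by
    congr 1; ext a
    rw [show ‖v a‖ ^ (2:ℝ) = ‖v a‖ ^ (2:ℕ) by rw [← Real.rpow_natCast]; norm_num]
    simp [sq_abs]
  rw [e1]
  rw [e2, e3] at H
  calc ∫ a, ‖u a‖ * ‖v a‖ ∂μ
      ≤ (∫ a, u a ^ 2 ∂μ) ^ ((1:ℝ)/2) * (∫ a, v a ^ 2 ∂μ) ^ ((1:ℝ)/2) := H
    _ = _ := by rw [Real.sqrt_eq_rpow, Real.sqrt_eq_rpow]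

lemma iterxz_eq_prod {F : ℝ × ℝ → ℝ} (hF : Continuous F) :
    (∫ x in (0:ℝ)..1, ∫ z in (0:ℝ)..1, F (x, z)) = ∫ p in Q2, F p := by
  have hint : Integrable (Function.uncurry fun x z => F (x, z))
      ((volume.restrict I01).prod (volume.restrict I01)) := by
    rw [Measure.prod_restrict, ← Measure.volume_eq_prod]
    exact memLp_one_iff_integrable.mp (memLpQ 1 hF)
  rw [intervalIntegral.integral_of_le zero_le_one]
  have : ∀ x : ℝ, (∫ z in (0:ℝ)..1, F (x, z)) = ∫ z in I01, F (x, z) := fun x =>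
    intervalIntegral.integral_of_le zero_le_one
  simp_rw [this]
  rw [MeasureTheory.integral_integral hint, Measure.prod_restrict, ← Measure.volume_eq_prod]

lemma iterzx_eq_prod {F : ℝ × ℝ → ℝ} (hF : Continuous F) :
    (∫ z in (0:ℝ)..1, ∫ x in (0:ℝ)..1, F (x, z)) = ∫ p in Q2, F p := by
  have hint : Integrable (Function.uncurry fun x z => F (x, z))
      ((volume.restrict I01).prod (volume.restrict I01)) := by
    rw [Measure.prod_restrict, ← Measure.volume_eq_prod]
    exact memLp_one_iff_integrable.mp (memLpQ 1 hF)
  rw [intervalIntegral.integral_of_le zero_le_one]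
  have : ∀ z : ℝ, (∫ x in (0:ℝ)..1, F (x, z)) = ∫ x in I01, F (x, z) := fun z =>
    intervalIntegral.integral_of_le zero_le_one
  simp_rw [this]
  rw [← MeasureTheory.integral_integral_swap hint, MeasureTheory.integral_integral hint,
    Measure.prod_restrict, ← Measure.volume_eq_prod]

lemma agmon1d {u : ℝ → ℝ} (hu : ContDiff ℝ 1 u) {x : ℝ} (hx : x ∈ Set.Icc (0:ℝ) 1) :
    u x ^ 2 ≤ (∫ t in (0:ℝ)..1, u t ^ 2) + 2 * ∫ t in (0:ℝ)..1, |u t * deriv u t| := by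
  have hucont : Continuous u := hu.continuous
  have hu' : Continuous (deriv u) := hu.continuous_deriv le_rfl
  obtain ⟨y, hy, hymin⟩ := isCompact_Icc.exists_isMinOn (Set.nonempty_Icc.mpr zero_le_one)
    ((hucont.pow 2).continuousOn : ContinuousOn (fun t => u t ^ 2) (Set.Icc 0 1))
  have hmean : u y ^ 2 ≤ ∫ t in (0:ℝ)..1, u t ^ 2 := by
    have h1 : (∫ t in (0:ℝ)..1, u y ^ 2) = u y ^ 2 := by simp
    rw [← h1]
    apply intervalIntegral.integral_mono_on zero_le_one
      intervalIntegrable_const ((hucont.pow 2).intervalIntegrable 0 1)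
    intro t ht; exact hymin ht
  have hderiv : ∀ t ∈ Set.uIcc y x, HasDerivAt (fun s => u s ^ 2)
      (2 * u t * deriv u t) t := by
    intro t _
    have h1 : HasDerivAt u (deriv u t) t := (hu.differentiable one_ne_zero t).hasDerivAt
    simpa [mul_comm, mul_assoc] using h1.fun_pow 2
  have hintc : Continuous fun t => 2 * u t * deriv u t :=
    (continuous_const.mul hucont).mul hu'
  have hftc : (∫ t in y..x, (2 * u t * deriv u t)) = u x ^ 2 - u y ^ 2 :=
    intervalIntegral.integral_eq_sub_of_hasDerivAt (f := fun s => u s ^ 2)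
      (f' := fun t => 2 * u t * deriv u t) hderiv (hintc.intervalIntegrable y x)
  have hsub : Set.uIcc y x ⊆ Set.Icc (0:ℝ) 1 := Set.uIcc_subset_Icc hy hx
  have habs : (∫ t in y..x, (2 * u t * deriv u t)) ≤ ∫ t in (0:ℝ)..1, |2 * u t * deriv u t| := by
    rcases le_total y x with hyx | hxy
    · calc (∫ t in y..x, (2 * u t * deriv u t)) ≤ ∫ t in y..x, |2 * u t * deriv u t| :=
            intervalIntegral.integral_mono hyx (hintc.intervalIntegrable y x)
              (hintc.abs.intervalIntegrable y x) (fun t => le_abs_self _)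
        _ ≤ _ :=
            intervalIntegral.integral_mono_interval
              (by simpa using (hsub Set.left_mem_uIcc).1)
              hyx (by simpa using (hsub Set.right_mem_uIcc).2)
              (ae_of_all _ fun t => abs_nonneg _) (hintc.abs.intervalIntegrable 0 1)
    · calc (∫ t in y..x, (2 * u t * deriv u t))
          ≤ |∫ t in y..x, (2 * u t * deriv u t)| := le_abs_self _
        _ = |∫ t in x..y, (2 * u t * deriv u t)| := by
            rw [intervalIntegral.integral_symm]; rw [abs_neg]
        _ ≤ ∫ t in x..y, |2 * u t * deriv u t| :=
            intervalIntegral.abs_integral_le_integral_abs hxy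
        _ ≤ _ :=
            intervalIntegral.integral_mono_interval
              (by simpa using (hsub Set.right_mem_uIcc).1)
              hxy (by simpa using (hsub Set.left_mem_uIcc).2)
              (ae_of_all _ fun t => abs_nonneg _) (hintc.abs.intervalIntegrable 0 1)
  have habs2 : (∫ t in (0:ℝ)..1, |2 * u t * deriv u t|)
      = 2 * ∫ t in (0:ℝ)..1, |u t * deriv u t| := by
    rw [← intervalIntegral.integral_const_mul]
    congr 1; ext t
    rw [mul_assoc, abs_mul]
    simp
  rw [habs2] at habs
  linarith

lemma pdx_continuous {h : ℝ × ℝ → ℝ} (hh : ContDiff ℝ 1 h) : Continuous (pdx h) := by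
  have key : ∀ p : ℝ × ℝ, pdx h p = fderiv ℝ h p (1, 0) := by
    intro p
    have hγ : HasDerivAt (fun x : ℝ => (x, p.2)) (1, 0) p.1 :=
      (hasDerivAt_id p.1).prodMk (hasDerivAt_const p.1 p.2)
    have hF : HasFDerivAt h (fderiv ℝ h (p.1, p.2)) (p.1, p.2) :=
      (hh.differentiable one_ne_zero (p.1, p.2)).hasFDerivAt
    have := hF.comp_hasDerivAt p.1 hγ
    exact this.deriv
  have : Continuous fun p : ℝ × ℝ => fderiv ℝ h p (1, 0) :=
    (hh.continuous_fderiv one_ne_zero).clm_apply continuous_const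
  exact this.congr fun p => (key p).symm

end StmtAux

open StmtAux

theorem stmt1 :
    ∃ C : ℝ, 0 < C ∧
      ∀ f g h : ℝ × ℝ → ℝ,
        Continuous f → Continuous g → ContDiff ℝ 1 h →
        Per f → Per g → Per h →
        (∫ x in (0:ℝ)..1, ∫ z in (0:ℝ)..1, |f (x, z) * g (x, z) * h (x, z)|) ≤
          C * l2 f * (⨆ z : Set.Icc (0:ℝ) 1, Real.sqrt (∫ x in (0:ℝ)..1, g (x, z.1) ^ 2)) *
            (l2 h) ^ ((1:ℝ)/2) * ((l2 h) ^ ((1:ℝ)/2) + (l2 (pdx h)) ^ ((1:ℝ)/2)) := by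
  refine ⟨2, two_pos, ?_⟩
  intro f g h hf hg hh _ _ _
  have hhc : Continuous h := hh.continuous
  have hpc : Continuous (pdx h) := pdx_continuous hh
  set Sg : ℝ := ⨆ z : Set.Icc (0:ℝ) 1, Real.sqrt (∫ x in (0:ℝ)..1, g (x, z.1) ^ 2) with hSgdef
  -- bound for the sup
  obtain ⟨K, hK⟩ := (isCompact_Icc.prod isCompact_Icc).exists_bound_of_continuousOn
    (hg.continuousOn (s := Set.Icc (0:ℝ) 1 ×ˢ Set.Icc (0:ℝ) 1))
  have hbdd : BddAbove (Set.range fun z : Set.Icc (0:ℝ) 1 =>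
      Real.sqrt (∫ x in (0:ℝ)..1, g (x, z.1) ^ 2)) := by
    refine ⟨Real.sqrt (K ^ 2), ?_⟩
    rintro _ ⟨z, rfl⟩
    apply Real.sqrt_le_sqrt
    have : (∫ x in (0:ℝ)..1, g (x, z.1) ^ 2) ≤ ∫ x in (0:ℝ)..1, K ^ 2 := by
      apply intervalIntegral.integral_mono_on zero_le_one
        ((by fun_prop : Continuous fun x : ℝ => g (x, z.1) ^ 2).intervalIntegrable 0 1)
        intervalIntegrable_const
      intro x hx
      have := hK (x, z.1) ⟨hx, z.2⟩
      have h2 : |g (x, z.1)| ≤ K := this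
      nlinarith [abs_nonneg (g (x, z.1)), sq_abs (g (x, z.1))]
    simpa using this
  have hSg0 : 0 ≤ Sg := le_trans (Real.sqrt_nonneg _)
    (le_ciSup hbdd (⟨0, by norm_num⟩ : Set.Icc (0:ℝ) 1))
  have hSgsq : ∀ z : ℝ, z ∈ Set.Icc (0:ℝ) 1 →
      (∫ x in (0:ℝ)..1, g (x, z) ^ 2) ≤ Sg ^ 2 := by
    intro z hz
    have h1 : Real.sqrt (∫ x in (0:ℝ)..1, g (x, z) ^ 2) ≤ Sg :=
      le_ciSup hbdd (⟨z, hz⟩ : Set.Icc (0:ℝ) 1)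
    have h2 : (0:ℝ) ≤ ∫ x in (0:ℝ)..1, g (x, z) ^ 2 :=
      intervalIntegral.integral_nonneg zero_le_one fun x _ => sq_nonneg _
    nlinarith [Real.sq_sqrt h2, Real.sqrt_nonneg (∫ x in (0:ℝ)..1, g (x, z) ^ 2)]
  -- abbreviations
  set a : ℝ := l2 h with ha
  set b : ℝ := l2 (pdx h) with hb
  have ha0 : 0 ≤ a := Real.sqrt_nonneg _
  have hb0 : 0 ≤ b := Real.sqrt_nonneg _
  -- identify l2 with product integrals
  have hl2f : l2 f = Real.sqrt (∫ p in Q2, f p ^ 2) := by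
    unfold l2; rw [iterxz_eq_prod (F := fun p => f p ^ 2) (hf.pow 2)]
  have hl2h : a = Real.sqrt (∫ p in Q2, h p ^ 2) := by
    rw [ha]; unfold l2; rw [iterxz_eq_prod (F := fun p => h p ^ 2) (hhc.pow 2)]
  have hl2p : b = Real.sqrt (∫ p in Q2, pdx h p ^ 2) := by
    rw [hb]; unfold l2; rw [iterxz_eq_prod (F := fun p => pdx h p ^ 2) (hpc.pow 2)]
  have hQh2 : (∫ p in Q2, h p ^ 2) = a ^ 2 := by
    have hnn : (0:ℝ) ≤ ∫ p in Q2, h p ^ 2 :=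
      setIntegral_nonneg (measurableSet_Ioc.prod measurableSet_Ioc) fun p _ => sq_nonneg _
    rw [hl2h, Real.sq_sqrt hnn]
  -- Step 1 : Cauchy-Schwarz in both variables
  have step1 : (∫ x in (0:ℝ)..1, ∫ z in (0:ℝ)..1, |f (x, z) * g (x, z) * h (x, z)|)
      ≤ l2 f * Real.sqrt (∫ p in Q2, (g p * h p) ^ 2) := by
    have e : (∫ x in (0:ℝ)..1, ∫ z in (0:ℝ)..1, |f (x, z) * g (x, z) * h (x, z)|)
        = ∫ p in Q2, |f p * (g p * h p)| := by
      rw [iterxz_eq_prod (F := fun p => |f p * g p * h p|) ((hf.mul hg).mul hhc).abs]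
      simp_rw [mul_assoc]
    rw [e, hl2f]
    exact cs_mem (memLpQ 2 hf) (memLpQ 2 (hg.mul hhc))
  -- Step 2 : the key anisotropic bound
  have hhx : ∀ z : ℝ, ContDiff ℝ 1 (fun x => h (x, z)) := fun z =>
    hh.comp (contDiff_id.prodMk contDiff_const)
  have hderiv_eq : ∀ z x : ℝ, deriv (fun x' => h (x', z)) x = pdx h (x, z) := fun z x => rfl
  -- inner bound for fixed z
  set N : ℝ → ℝ := fun z => (∫ x in (0:ℝ)..1, h (x, z) ^ 2)
      + 2 * ∫ x in (0:ℝ)..1, |h (x, z) * pdx h (x, z)| with hN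
  have hN0 : ∀ z : ℝ, 0 ≤ N z := by
    intro z
    have h1 : (0:ℝ) ≤ ∫ x in (0:ℝ)..1, h (x, z) ^ 2 :=
      intervalIntegral.integral_nonneg zero_le_one fun x _ => sq_nonneg _
    have h2 : (0:ℝ) ≤ ∫ x in (0:ℝ)..1, |h (x, z) * pdx h (x, z)| :=
      intervalIntegral.integral_nonneg zero_le_one fun x _ => abs_nonneg _
    simp only [hN]; linarith
  have hagmon : ∀ z : ℝ, ∀ x ∈ Set.Icc (0:ℝ) 1, h (x, z) ^ 2 ≤ N z := by
    intro z x hx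
    have := agmon1d (hhx z) hx
    simpa [hderiv_eq z, hN, abs_mul] using this
  have hinner : ∀ z : ℝ, z ∈ Set.Icc (0:ℝ) 1 →
      (∫ x in (0:ℝ)..1, (g (x, z) * h (x, z)) ^ 2) ≤ Sg ^ 2 * N z := by
    intro z hz
    have hgz : Continuous fun x => g (x, z) := hg.comp (continuous_id.prodMk continuous_const)
    have hhz : Continuous fun x => h (x, z) := hhc.comp (continuous_id.prodMk continuous_const)
    calc (∫ x in (0:ℝ)..1, (g (x, z) * h (x, z)) ^ 2)
        ≤ ∫ x in (0:ℝ)..1, g (x, z) ^ 2 * N z := by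
          apply intervalIntegral.integral_mono_on zero_le_one
            (((hgz.mul hhz).pow 2).intervalIntegrable 0 1)
            (((hgz.pow 2).mul continuous_const).intervalIntegrable 0 1)
          intro x hx
          have h1 := hagmon z x hx
          have h2 : (g (x, z) * h (x, z)) ^ 2 = g (x, z) ^ 2 * h (x, z) ^ 2 := by ring
          show (g (x, z) * h (x, z)) ^ 2 ≤ g (x, z) ^ 2 * N z
          rw [h2]
          exact mul_le_mul_of_nonneg_left h1 (sq_nonneg _)
      _ = (∫ x in (0:ℝ)..1, g (x, z) ^ 2) * N z := by
          rw [intervalIntegral.integral_mul_const]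
      _ ≤ Sg ^ 2 * N z := mul_le_mul_of_nonneg_right (hSgsq z hz) (hN0 z)
  -- integrate in z
  have hcont_gh2 : Continuous fun z => ∫ x in (0:ℝ)..1, (g (x, z) * h (x, z)) ^ 2 := by
    apply intervalIntegral.continuous_parametric_intervalIntegral_of_continuous'
    exact (((hg.comp (continuous_snd.prodMk continuous_fst)).mul
      (hhc.comp (continuous_snd.prodMk continuous_fst))).pow 2)
  have hcont_h2 : Continuous fun z => ∫ x in (0:ℝ)..1, h (x, z) ^ 2 := by
    apply intervalIntegral.continuous_parametric_intervalIntegral_of_continuous'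
    exact ((hhc.comp (continuous_snd.prodMk continuous_fst)).pow 2)
  have hcont_hp : Continuous fun z => ∫ x in (0:ℝ)..1, |h (x, z) * pdx h (x, z)| := by
    apply intervalIntegral.continuous_parametric_intervalIntegral_of_continuous'
    exact ((hhc.comp (continuous_snd.prodMk continuous_fst)).mul
      (hpc.comp (continuous_snd.prodMk continuous_fst))).abs
  have hcontN : Continuous N := by
    simp only [hN]
    exact hcont_h2.add (continuous_const.mul hcont_hp)
  have step2a : (∫ z in (0:ℝ)..1, ∫ x in (0:ℝ)..1, (g (x, z) * h (x, z)) ^ 2)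
      ≤ ∫ z in (0:ℝ)..1, Sg ^ 2 * N z := by
    apply intervalIntegral.integral_mono_on zero_le_one
      (hcont_gh2.intervalIntegrable 0 1)
      ((continuous_const.mul hcontN).intervalIntegrable 0 1)
    exact hinner
  have step2b : (∫ z in (0:ℝ)..1, Sg ^ 2 * N z)
      = Sg ^ 2 * ((∫ p in Q2, h p ^ 2) + 2 * ∫ p in Q2, |h p * pdx h p|) := by
    rw [intervalIntegral.integral_const_mul]
    congr 1
    simp only [hN]
    rw [intervalIntegral.integral_add (hcont_h2.intervalIntegrable 0 1)
      ((show Continuous fun z => (2:ℝ) * ∫ x in (0:ℝ)..1, |h (x, z) * pdx h (x, z)| from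
        continuous_const.mul hcont_hp).intervalIntegrable 0 1),
      intervalIntegral.integral_const_mul]
    congr 1
    · exact iterzx_eq_prod (hhc.pow 2)
    · congr 1
      exact iterzx_eq_prod ((hhc.mul hpc).abs)
  have hcsQ : (∫ p in Q2, |h p * pdx h p|) ≤ a * b := by
    rw [hl2h, hl2p]
    exact cs_mem (memLpQ 2 hhc) (memLpQ 2 hpc)
  have step2 : (∫ p in Q2, (g p * h p) ^ 2) ≤ Sg ^ 2 * (a ^ 2 + 2 * (a * b)) := by
    have e : (∫ p in Q2, (g p * h p) ^ 2)
        = ∫ z in (0:ℝ)..1, ∫ x in (0:ℝ)..1, (g (x, z) * h (x, z)) ^ 2 :=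
      (iterzx_eq_prod ((hg.mul hhc).pow 2)).symm
    rw [e]
    calc (∫ z in (0:ℝ)..1, ∫ x in (0:ℝ)..1, (g (x, z) * h (x, z)) ^ 2)
        ≤ ∫ z in (0:ℝ)..1, Sg ^ 2 * N z := step2a
      _ = Sg ^ 2 * ((∫ p in Q2, h p ^ 2) + 2 * ∫ p in Q2, |h p * pdx h p|) := step2b
      _ ≤ Sg ^ 2 * (a ^ 2 + 2 * (a * b)) := by
          apply mul_le_mul_of_nonneg_left _ (sq_nonneg Sg)
          rw [hQh2]
          linarith [hcsQ]
  -- Step 3 : take square roots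
  set R : ℝ := 2 * Sg * Real.sqrt a * (Real.sqrt a + Real.sqrt b) with hR
  have hR0 : 0 ≤ R := by
    apply mul_nonneg
    apply mul_nonneg (by linarith) (Real.sqrt_nonneg _)
    positivity
  have hsq : Sg ^ 2 * (a ^ 2 + 2 * (a * b)) ≤ R ^ 2 := by
    have hsa := Real.sq_sqrt ha0
    have hsb := Real.sq_sqrt hb0
    have hsa0 := Real.sqrt_nonneg a
    have hsb0 := Real.sqrt_nonneg b
    have hRsq : R ^ 2 = 4 * Sg ^ 2 * a * (a + 2 * (Real.sqrt a * Real.sqrt b) + b) := by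
      have e : R ^ 2 = 4 * Sg ^ 2 * Real.sqrt a ^ 2 *
          (Real.sqrt a ^ 2 + 2 * (Real.sqrt a * Real.sqrt b) + Real.sqrt b ^ 2) := by
        rw [hR]; ring
      rw [e, hsa, hsb]
    rw [hRsq]
    nlinarith [sq_nonneg Sg, mul_nonneg hsa0 hsb0, mul_nonneg ha0 hb0, sq_nonneg a,
      mul_nonneg (mul_nonneg (sq_nonneg Sg : (0:ℝ) ≤ Sg^2) ha0) (mul_nonneg hsa0 hsb0),
      mul_nonneg (sq_nonneg Sg : (0:ℝ) ≤ Sg^2) (mul_nonneg ha0 hb0),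
      mul_nonneg (sq_nonneg Sg : (0:ℝ) ≤ Sg^2) (sq_nonneg a)]
  have step3 : Real.sqrt (∫ p in Q2, (g p * h p) ^ 2) ≤ R := by
    calc Real.sqrt (∫ p in Q2, (g p * h p) ^ 2) ≤ Real.sqrt (R ^ 2) :=
          Real.sqrt_le_sqrt (le_trans step2 hsq)
      _ = R := by rw [Real.sqrt_sq hR0]
  -- conclude
  have hl2f0 : 0 ≤ l2 f := Real.sqrt_nonneg _
  have final : (∫ x in (0:ℝ)..1, ∫ z in (0:ℝ)..1, |f (x, z) * g (x, z) * h (x, z)|)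
      ≤ l2 f * R := le_trans step1 (mul_le_mul_of_nonneg_left step3 hl2f0)
  have erpow : ∀ c : ℝ, c ^ ((1:ℝ)/2) = Real.sqrt c := fun c => (Real.sqrt_eq_rpow c).symm
  rw [erpow, erpow]
  calc (∫ x in (0:ℝ)..1, ∫ z in (0:ℝ)..1, |f (x, z) * g (x, z) * h (x, z)|)
      ≤ l2 f * R := final
    _ = 2 * l2 f * Sg * Real.sqrt a * (Real.sqrt a + Real.sqrt b) := by rw [hR]; ring
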